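/- For every odd n ≥ 5 and every integer j with 1 ≤ j ≤ (n−3)/2, the integer 2^{2j}·(2j+1)! divides the product n·(n²−1²)·(n²−3²)⋯(n²−(2j−1)²) = n·∏_{i=1}^{j}(n²−(2i−1)²); in particular every coefficient of the polynomial f_n is an integer. -/

import Mathlib

noncomputable section

open Polynomial

/-- `ψ^i(X) := Σ_{j=1}^{i} (C(i,j)·C(i+j−1,j)/C(2j−1,j))·X^j ∈ ℚ[X]`; `ψ^0 = 0`. -/
def psiPoly (i : ℕ) : ℚ[X] :=
  ∑ j ∈ Finset.Icc 1 i,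
    C (((i.choose j : ℚ) * ((i + j - 1).choose j : ℚ)) / ((2 * j - 1).choose j : ℚ)) * X ^ j

/-- For odd `n ≥ 3`,
`f_n(X) := n + Σ_{j=1}^{(n−3)/2} (n·(n²−1²)·(n²−3²)⋯(n²−(2j−1)²)/(2^{2j}·(2j+1)!))·X^j
  + X^{(n−1)/2} ∈ ℚ[X]`. -/
def fPoly (n : ℕ) : ℚ[X] :=
  C (n : ℚ) +
    ∑ j ∈ Finset.Icc 1 ((n - 3) / 2),
      C (((n : ℚ) * ∏ i ∈ Finset.Icc 1 j, ((n : ℚ) ^ 2 - (2 * (i : ℚ) - 1) ^ 2)) /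
          (2 ^ (2 * j) * ((2 * j + 1).factorial : ℚ))) * X ^ j +
    X ^ ((n - 1) / 2)

/-- `(X+2)/2 ∈ ℚ[X]`. -/
def halfXAddTwo : ℚ[X] := C (1 / 2 : ℚ) * (X + 2)

/-- For odd `n = 2m+1` and `j ≤ m`, the product `∏_{i=1}^{j}(n²−(2i−1)²)`
equals `4^j·(2j)!·C(m+j, 2j)`. -/
lemma prodlem (m j : ℕ) (hj : j ≤ m) :
    (∏ i ∈ Finset.Icc 1 j, (((2*m+1 : ℕ) : ℤ) ^ 2 - (2 * (i : ℤ) - 1) ^ 2))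
      = 4 ^ j * ((2*j).factorial : ℤ) * ((m+j).choose (2*j) : ℤ) := by
  induction j with
  | zero => simp
  | succ j ih =>
    rw [Finset.prod_Icc_succ_top (by omega : 1 ≤ j+1), ih (by omega)]
    have hc1 : ((m+j+1).choose (2*j+2) : ℤ) * (2*j+2) = (m+j+1) * ((m+j).choose (2*j+1) : ℤ) := by
      exact_mod_cast (Nat.add_one_mul_choose_eq (m+j) (2*j+1)).symm
    have hc2 : ((m+j).choose (2*j+1) : ℤ) * (2*j+1) = ((m+j).choose (2*j) : ℤ) * ((m : ℤ) - j) := by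
      have h := Nat.choose_succ_right_eq (m+j) (2*j)
      have h2 : (m+j).choose (2*j+1) * (2*j+1) = (m+j).choose (2*j) * (m - j) := by
        rw [h]; congr 1; omega
      have : ((m : ℤ) - j) = ((m - j : ℕ) : ℤ) := by
        have : j ≤ m := by omega
        push_cast [this]; ring
      rw [this]; exact_mod_cast h2
    have hfac : (2*(j+1)).factorial = (2*j+2) * ((2*j+1) * (2*j).factorial) := by
      have : 2*(j+1) = (2*j+1)+1 := by ring
      rw [this, Nat.factorial_succ, Nat.factorial_succ]
    rw [hfac]
    have hch : m + (j+1) = (m+j)+1 := by ring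
    rw [hch]
    have h2c : 2*(j+1) = 2*j+2 := by ring
    rw [h2c]
    push_cast
    linear_combination (-(4:ℤ)^(j+1) * ((2*j).factorial : ℤ) * (2*(j:ℤ)+1)) * hc1 +
      (-(4:ℤ)^(j+1) * ((2*j).factorial : ℤ) * ((m:ℤ)+(j:ℤ)+1)) * hc2

/-- For odd `n = 2m+1` and `j ≤ m`, `n·∏_{i=1}^{j}(n²−(2i−1)²)` equals
`2^{2j}·(2j+1)!·(C(m+j+1, 2j+1) + C(m+j, 2j+1))`, an explicit multiple. -/
lemma keylem (m j : ℕ) (hj : j ≤ m) :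
    ((2*m+1 : ℕ) : ℤ) * ∏ i ∈ Finset.Icc 1 j, (((2*m+1 : ℕ) : ℤ) ^ 2 - (2 * (i : ℤ) - 1) ^ 2)
      = ((2 : ℤ) ^ (2 * j) * ((2 * j + 1).factorial : ℤ)) *
        (((m+j+1).choose (2*j+1) : ℤ) + ((m+j).choose (2*j+1) : ℤ)) := by
  rw [prodlem m j hj]
  have hc1 : ((m+j+1).choose (2*j+1) : ℤ) * (2*j+1) = (m+j+1) * ((m+j).choose (2*j) : ℤ) := by
    exact_mod_cast (Nat.add_one_mul_choose_eq (m+j) (2*j)).symm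
  have hc2 : ((m+j).choose (2*j+1) : ℤ) * (2*j+1) = ((m+j).choose (2*j) : ℤ) * ((m : ℤ) - j) := by
    have h2 : (m+j).choose (2*j+1) * (2*j+1) = (m+j).choose (2*j) * (m - j) := by
      rw [Nat.choose_succ_right_eq]; congr 1; omega
    have hmj : ((m : ℤ) - j) = ((m - j : ℕ) : ℤ) := by push_cast [hj]; ring
    rw [hmj]; exact_mod_cast h2
  have hfac : (2*j+1).factorial = (2*j+1) * (2*j).factorial := Nat.factorial_succ _
  have hpow : (2:ℤ)^(2*j) = 4^j := by rw [pow_mul]; norm_num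
  rw [hfac, hpow]
  push_cast
  linear_combination (-(4:ℤ)^j * ((2*j).factorial : ℤ)) * hc1 + (-(4:ℤ)^j * ((2*j).factorial : ℤ)) * hc2

/-- For every odd `n ≥ 5` and every `1 ≤ j ≤ (n−3)/2`, the integer
`2^{2j}·(2j+1)!` divides `n·∏_{i=1}^{j}(n²−(2i−1)²)`; in particular every coefficient of
`f_n` is an integer. -/
theorem dvd_prod_fPoly_coeff_int (n : ℕ) (hodd : Odd n) (hn : 5 ≤ n) :
    (∀ j : ℕ, 1 ≤ j → j ≤ (n - 3) / 2 →
      ((2 : ℤ) ^ (2 * j) * ((2 * j + 1).factorial : ℤ)) ∣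
        (n : ℤ) * ∏ i ∈ Finset.Icc 1 j, ((n : ℤ) ^ 2 - (2 * (i : ℤ) - 1) ^ 2)) ∧
    (∀ m : ℕ, ∃ z : ℤ, (fPoly n).coeff m = (z : ℚ)) := by
  obtain ⟨m, hm⟩ := hodd
  have hm' : n = 2*m+1 := by omega
  subst hm'
  have hm2 : 2 ≤ m := by omega
  have hd : (2*m+1 - 3) / 2 = m - 1 := by omega
  have htop : (2*m+1 - 1) / 2 = m := by omega
  have hdvd : ∀ j : ℕ, 1 ≤ j → j ≤ (2*m+1 - 3) / 2 →
      ((2 : ℤ) ^ (2 * j) * ((2 * j + 1).factorial : ℤ)) ∣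
        ((2*m+1 : ℕ) : ℤ) * ∏ i ∈ Finset.Icc 1 j, (((2*m+1 : ℕ) : ℤ) ^ 2 - (2 * (i : ℤ) - 1) ^ 2) := by
    intro j hj1 hj2
    exact ⟨_, keylem m j (by omega)⟩
  refine ⟨hdvd, ?_⟩
  intro k
  have hcoeff : (fPoly (2*m+1)).coeff k =
      (if k = 0 then ((2*m+1 : ℕ) : ℚ) else 0) +
      (if k ∈ Finset.Icc 1 ((2*m+1 - 3) / 2) then
        (((2*m+1 : ℕ) : ℚ) * ∏ i ∈ Finset.Icc 1 k, (((2*m+1 : ℕ) : ℚ) ^ 2 - (2 * (i : ℚ) - 1) ^ 2)) /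
          (2 ^ (2 * k) * ((2 * k + 1).factorial : ℚ)) else 0) +
      (if k = (2*m+1 - 1) / 2 then 1 else 0) := by
    simp only [fPoly, Polynomial.coeff_add, Polynomial.finset_sum_coeff,
      Polynomial.coeff_C_mul, Polynomial.coeff_X_pow, Polynomial.coeff_C,
      mul_ite, mul_one, mul_zero]
    rw [Finset.sum_ite_eq (Finset.Icc 1 ((2*m+1 - 3) / 2)) k]
  rw [hcoeff]
  by_cases hk : k ∈ Finset.Icc 1 ((2*m+1 - 3) / 2)
  · have hk1 : 1 ≤ k := (Finset.mem_Icc.mp hk).1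
    have hk2 : k ≤ (2*m+1 - 3)/2 := (Finset.mem_Icc.mp hk).2
    have hk0 : k ≠ 0 := by omega
    have hktop : k ≠ (2*m+1 - 1) / 2 := by omega
    obtain ⟨z, hz⟩ := hdvd k hk1 hk2
    refine ⟨z, ?_⟩
    rw [if_neg hk0, if_pos hk, if_neg hktop]
    have hzq : (((2*m+1 : ℕ) : ℚ) * ∏ i ∈ Finset.Icc 1 k, (((2*m+1 : ℕ) : ℚ) ^ 2 - (2 * (i : ℚ) - 1) ^ 2))
        = (2 ^ (2 * k) * ((2 * k + 1).factorial : ℚ)) * (z : ℚ) := by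
      have := congrArg (fun x : ℤ => (x : ℚ)) hz
      push_cast at this ⊢
      linarith [this]
    rw [hzq]
    have hne : (2 ^ (2 * k) * ((2 * k + 1).factorial : ℚ)) ≠ 0 := by positivity
    field_simp
    ring
  · refine ⟨(if k = 0 then ((2*m+1 : ℕ) : ℤ) else 0) + (if k = (2*m+1 - 1) / 2 then 1 else 0), ?_⟩
    rw [if_neg hk]
    push_cast
    split_ifs <;> ring
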